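/- Let G = (V,E,w) be a weighted graph with k vertices, C* ⊆ E a minimum cut with w(C*) > 0 and w(δ(v)) ≥ w(C*) for every vertex v. Let p : E → [0,1] with Σ_{e∈C*}(1-p_e)w(e) ≤ η·w(C*) and Σ_{e∈E∖C*} p_e w(e) ≤ ρ·w(C*), and let B ≥ 1. Define w_B(e) = (1 + (B-1)(1-p_e))·w(e). If k ≥ 2ρ + 2 + 2(1+(B-1)η)/B (so that the bound is meaningful), then 1 - w_B(C*)/w_B(E) ≥ 1 - (1 + (B-1)η)/(B·k/2 - (B-1)(ρ + 1 - η)). -/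

import Mathlib

lemma endpoints_card {V : Type*} [Fintype V] [DecidableEq V] (e : Sym2 V)
    (h : ¬ e.IsDiag) : (Finset.univ.filter (fun v => v ∈ e)).card = 2 := by
  induction e using Sym2.ind with
  | _ x y =>
    rw [Sym2.mk_isDiag_iff] at h
    have : Finset.univ.filter (fun v => v ∈ s(x, y)) = {x, y} := by
      ext v
      simp [Sym2.mem_iff]
    rw [this, Finset.card_insert_of_notMem (by simp [h]), Finset.card_singleton]

set_option maxHeartbeats 1600000 in
theorem stmt_5 {V : Type*} [Fintype V] [DecidableEq V]
    (E : Finset (Sym2 V)) (w : Sym2 V → ℝ)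
    (hw : ∀ e ∈ E, 0 ≤ w e)
    (hloopless : ∀ e ∈ E, ¬ e.IsDiag)
    (C : Finset (Sym2 V)) (hC : C ⊆ E)
    (hCpos : 0 < ∑ e ∈ C, w e)
    (hmin : ∀ v : V, (∑ e ∈ E.filter (fun e => v ∈ e), w e) ≥ ∑ e ∈ C, w e)
    (p : Sym2 V → ℝ) (hp0 : ∀ e, 0 ≤ p e) (hp1 : ∀ e, p e ≤ 1)
    (η ρ B : ℝ) (hη0 : 0 ≤ η) (hη1 : η ≤ 1) (hρ : 1 ≤ ρ) (hB : 1 ≤ B)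
    (hfn : (∑ e ∈ C, (1 - p e) * w e) ≤ η * ∑ e ∈ C, w e)
    (hfp : (∑ e ∈ E \ C, p e * w e) ≤ ρ * ∑ e ∈ C, w e)
    (wB : Sym2 V → ℝ) (hwB : ∀ e, wB e = (1 + (B - 1) * (1 - p e)) * w e)
    (hk : (Fintype.card V : ℝ) ≥ 2 * ρ + 2 + 2 * (1 + (B - 1) * η) / B) :
    1 - (∑ e ∈ C, wB e) / (∑ e ∈ E, wB e) ≥
      1 - (1 + (B - 1) * η) /
        (B * (Fintype.card V : ℝ) / 2 - (B - 1) * (ρ + 1 - η)) := by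
  set WC := ∑ e ∈ C, w e with hWC
  set WE := ∑ e ∈ E, w e with hWE
  set K := (Fintype.card V : ℝ) with hK
  set N := 1 + (B - 1) * η with hN
  set D := B * K / 2 - (B - 1) * (ρ + 1 - η) with hD
  clear_value D N K WE WC
  have hB1 : (0:ℝ) ≤ B - 1 := by linarith
  -- handshake: 2 * WE = ∑ degrees
  have handshake : ∑ v : V, ∑ e ∈ E.filter (fun e => v ∈ e), w e = 2 * WE := by
    have : ∀ v : V, ∑ e ∈ E.filter (fun e => v ∈ e), w e
        = ∑ e ∈ E, if v ∈ e then w e else 0 := fun v => (Finset.sum_filter _ _)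
    simp_rw [this]
    rw [Finset.sum_comm]
    rw [hWE, Finset.mul_sum]
    apply Finset.sum_congr rfl
    intro e he
    rw [← Finset.sum_filter, Finset.sum_const, endpoints_card e (hloopless e he)]
    push_cast
    ring
  have hKWC : K * WC ≤ 2 * WE := by
    rw [← handshake, hK]
    calc (Fintype.card V : ℝ) * WC = ∑ _v : V, WC := by
          rw [Finset.sum_const, Finset.card_univ]; push_cast; ring
      _ ≤ _ := Finset.sum_le_sum (fun v _ => hmin v)
  -- wB sums
  have haN : ∑ e ∈ C, wB e ≤ N * WC := by
    have : ∑ e ∈ C, wB e = WC + (B - 1) * ∑ e ∈ C, (1 - p e) * w e := by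
      rw [hWC, Finset.mul_sum, ← Finset.sum_add_distrib]
      exact Finset.sum_congr rfl (fun e _ => by rw [hwB]; ring)
    rw [this, hN]
    nlinarith [hfn]
  have haWC : WC ≤ ∑ e ∈ C, wB e := by
    rw [hWC]
    apply Finset.sum_le_sum
    intro e he
    rw [hwB]
    have h1 := hw e (hC he)
    have h2 := hp1 e
    nlinarith [mul_nonneg (mul_nonneg hB1 (by linarith : (0:ℝ) ≤ 1 - p e)) h1]
  have hsplit : ∑ e ∈ E, wB e = ∑ e ∈ C, wB e + ∑ e ∈ E \ C, wB e := by
    rw [add_comm, Finset.sum_sdiff hC]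
  have hrest : ∑ e ∈ E \ C, wB e ≥ B * (WE - WC) - (B - 1) * (ρ * WC) := by
    have h1 : ∑ e ∈ E \ C, wB e
        = B * ∑ e ∈ E \ C, w e - (B - 1) * ∑ e ∈ E \ C, p e * w e := by
      rw [Finset.mul_sum, Finset.mul_sum, ← Finset.sum_sub_distrib]
      exact Finset.sum_congr rfl (fun e _ => by rw [hwB]; ring)
    have h2 : ∑ e ∈ E \ C, w e = WE - WC := by
      rw [hWE, hWC, ← Finset.sum_sdiff hC]; ring
    rw [h1, h2]
    nlinarith [hfp]
  have hBpos : (0:ℝ) < B := by linarith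
  have hDN : D - N ≥ ρ + N := by
    have h3 : 2 * N ≤ (K - (2 * ρ + 2)) * B :=
      (div_le_iff₀ hBpos).mp (by linarith)
    rw [hD, hN]
    rw [hN] at h3
    nlinarith [h3]
  have hNpos : 0 < N := by rw [hN]; nlinarith
  have hDpos : 0 < D := by nlinarith
  have hT : ∑ e ∈ E, wB e ≥ ∑ e ∈ C, wB e + (D - N) * WC := by
    rw [hsplit]
    have : B * (WE - WC) - (B - 1) * (ρ * WC) ≥ (D - N) * WC := by
      rw [hD, hN]
      nlinarith [hKWC]
    linarith [hrest, this]
  have hapos : 0 < ∑ e ∈ C, wB e := lt_of_lt_of_le hCpos haWC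
  have hTpos : 0 < ∑ e ∈ E, wB e := by
    have := mul_nonneg (by linarith : (0:ℝ) ≤ D - N) hCpos.le
    linarith
  have key : (∑ e ∈ C, wB e) / (∑ e ∈ E, wB e) ≤ N / D := by
    rw [div_le_div_iff₀ hTpos hDpos]
    have e1 : (∑ e ∈ C, wB e) * (D - N) ≤ (N * WC) * (D - N) :=
      mul_le_mul_of_nonneg_right haN (by linarith)
    have e2 : N * (∑ e ∈ C, wB e + (D - N) * WC) ≤ N * ∑ e ∈ E, wB e :=
      mul_le_mul_of_nonneg_left hT hNpos.le
    nlinarith [e1, e2]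
  linarith
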